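/- Let V ∈ L¹ ∩ L^∞(ℝ, ℂ^{2×2}) with |V(x)| ≲ ⟨x⟩^{-3-ε} for some ε > 0, and let Ψ = (ψ₁, ψ₂) ∈ L^∞(ℝ, ℂ²) solve (D_m + V)Ψ = mΨ distributionally. Then ψ₂ ∈ L¹(ℝ, ℂ), the limits l_± := lim_{x→±∞} ψ₁(x) exist, and ψ₁ - l_+χ_{(0,∞)} - l_-χ_{(-∞,0)} decays like ⟨x⟩^{-ε/2}. -/

import Mathlib

open Real MeasureTheory intervalIntegral Filter Topology Set

noncomputable def phi (p x : ℝ) : ℝ := Real.sqrt (1 + x ^ 2) ^ (-p)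

lemma one_le_w (x : ℝ) : 1 ≤ Real.sqrt (1 + x ^ 2) := by
  rw [Real.one_le_sqrt]; nlinarith [sq_nonneg x]

lemma w_pos (x : ℝ) : 0 < Real.sqrt (1 + x ^ 2) := lt_of_lt_of_le one_pos (one_le_w x)

lemma phi_pos (p x : ℝ) : 0 < phi p x := Real.rpow_pos_of_pos (w_pos x) _

lemma phi_nonneg (p x : ℝ) : 0 ≤ phi p x := (phi_pos p x).le

lemma phi_eq (p x : ℝ) : phi p x = (1 + x ^ 2) ^ (-p / 2 : ℝ) := by
  unfold phi
  rw [Real.sqrt_eq_rpow, ← Real.rpow_mul (by positivity)]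
  congr 1
  ring

lemma phi_le_one {p : ℝ} (hp : 0 ≤ p) (x : ℝ) : phi p x ≤ 1 :=
  Real.rpow_le_one_of_one_le_of_nonpos (one_le_w x) (by linarith)

lemma phi_mono_exp {p q : ℝ} (h : q ≤ p) (x : ℝ) : phi p x ≤ phi q x :=
  Real.rpow_le_rpow_of_exponent_le (one_le_w x) (by linarith)

lemma phi_even (p x : ℝ) : phi p (-x) = phi p x := by simp [phi, neg_sq]

lemma phi_anti {q x y : ℝ} (hq : 0 ≤ q) (hx : 0 ≤ x) (hxy : x ≤ y) : phi q y ≤ phi q x :=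
  Real.rpow_le_rpow_of_nonpos (w_pos x)
    (Real.sqrt_le_sqrt (by nlinarith)) (by linarith)

lemma phi_continuous (p : ℝ) : Continuous (phi p) := by
  apply Continuous.rpow_const
  · exact (continuous_const.add (continuous_pow 2)).sqrt
  · exact fun x => Or.inl (w_pos x).ne'

lemma phi_integrable {p : ℝ} (hp : 1 < p) : Integrable (phi p) := by
  have h := integrable_rpow_neg_one_add_norm_sq (E := ℝ) (μ := volume) (r := p)
    (by simpa using hp)
  exact h.congr (Eventually.of_forall fun x => by
    rw [phi_eq]; norm_num [sq_abs])

lemma phi_hasDeriv (q : ℝ) (x : ℝ) :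
    HasDerivAt (fun x : ℝ => (1 + x ^ 2) ^ (-q / 2 : ℝ))
      (-q / 2 * (1 + x ^ 2) ^ (-q / 2 - 1 : ℝ) * (2 * x)) x := by
  have h1 : HasDerivAt (fun x : ℝ => 1 + x ^ 2) (2 * x) x := by
    simpa using (hasDerivAt_pow 2 x).const_add 1
  have h2 := (Real.hasDerivAt_rpow_const (x := 1 + x ^ 2) (p := -q / 2)
    (Or.inl (by positivity))).comp x h1
  exact h2

lemma abs_le_rpow_half (t : ℝ) : |t| ≤ (1 + t ^ 2) ^ ((1:ℝ) / 2) := by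
  rw [← Real.sqrt_eq_rpow, ← Real.sqrt_sq_eq_abs]
  exact Real.sqrt_le_sqrt (by nlinarith)

lemma phi_tail_Ioi {p : ℝ} (hp : 1 < p) :
    ∃ K, 0 ≤ K ∧ ∀ x : ℝ, 0 ≤ x → ∫ t in Ioi x, phi p t ≤ K * phi (p - 1) x := by
  set q := p - 1 with hqdef
  have hq : 0 < q := by simp only [hqdef]; linarith
  have hint := phi_integrable hp
  set F : ℝ → ℝ := fun x => (1 + x ^ 2) ^ (-q / 2 : ℝ) with hF
  set G : ℝ → ℝ := fun t => q * t * (1 + t ^ 2) ^ (-q / 2 - 1 : ℝ) with hG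
  have hFd : ∀ x : ℝ, HasDerivAt (fun y => -F y) (G x) x := fun x => by
    have h : HasDerivAt (fun y => -F y) (-(-q / 2 * (1 + x ^ 2) ^ (-q / 2 - 1 : ℝ) * (2 * x))) x :=
      (phi_hasDeriv q x).neg
    convert h using 1
    simp only [hG]; ring
  have hGcont : Continuous G := by
    apply (continuous_const.mul continuous_id).mul
    apply Continuous.rpow_const (continuous_const.add (continuous_pow 2))
    exact fun x => Or.inl (by simp only [Pi.add_apply]; positivity)
  have hphi_split : ∀ t : ℝ, phi p t = (1 + t ^ 2) ^ ((1:ℝ)/2) * (1 + t ^ 2) ^ (-q / 2 - 1 : ℝ) := by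
    intro t
    rw [phi_eq, ← Real.rpow_add (by positivity)]
    congr 1
    simp only [hqdef]; ring
  have hGbound : ∀ t, ‖G t‖ ≤ q * phi p t := by
    intro t
    have h1 : ‖G t‖ = q * |t| * (1 + t ^ 2) ^ (-q / 2 - 1 : ℝ) := by
      simp only [hG, Real.norm_eq_abs, abs_mul, abs_of_pos hq,
        abs_of_pos (Real.rpow_pos_of_pos (by positivity : (0:ℝ) < 1 + t ^ 2) _)]
    rw [h1, hphi_split t, ← mul_assoc]
    apply mul_le_mul_of_nonneg_right _ (Real.rpow_nonneg (by positivity) _)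
    exact mul_le_mul_of_nonneg_left (abs_le_rpow_half t) hq.le
  have hGint : Integrable G :=
    (hint.const_mul q).mono' hGcont.aestronglyMeasurable
      (Eventually.of_forall hGbound)
  have hFlim : Tendsto (fun x => -F x) atTop (𝓝 0) := by
    rw [show (0:ℝ) = -0 by simp]
    apply Tendsto.neg
    have h1 : Tendsto (fun x : ℝ => 1 + x ^ 2) atTop atTop :=
      tendsto_atTop_add_const_left _ 1 (tendsto_pow_atTop two_ne_zero)
    have h2 := (tendsto_rpow_neg_atTop (by linarith : (0:ℝ) < q / 2)).comp h1
    simpa [hF, Function.comp_def, neg_div] using h2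
  have key : ∀ x : ℝ, ∫ t in Ioi x, G t = F x := by
    intro x
    have h := integral_Ioi_of_hasDerivAt_of_tendsto' (f' := G) (a := x)
      (fun t _ => hFd t) hGint.integrableOn hFlim
    simpa using h
  have hI0 : 0 ≤ ∫ t, phi p t := integral_nonneg (phi_nonneg p)
  refine ⟨max (Real.sqrt 2 / q) ((∫ t, phi p t) / phi q 1), le_max_of_le_left (by positivity), ?_⟩
  intro x hx
  rcases le_or_gt 1 x with h1x | h1x
  · -- x ≥ 1 : pointwise comparison with G on Ioi x
    have hpt : ∀ t : ℝ, 1 ≤ t → phi p t ≤ Real.sqrt 2 / q * G t := by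
      intro t ht
      have ht0 : (0:ℝ) < t := lt_of_lt_of_le one_pos ht
      have hle : (1 + t ^ 2) ^ ((1:ℝ)/2) ≤ Real.sqrt 2 * t := by
        rw [← Real.sqrt_eq_rpow]
        calc Real.sqrt (1 + t ^ 2) ≤ Real.sqrt (2 * t ^ 2) :=
              Real.sqrt_le_sqrt (by nlinarith)
          _ = Real.sqrt 2 * t := by
              rw [Real.sqrt_mul (by norm_num), Real.sqrt_sq ht0.le]
      have : Real.sqrt 2 / q * G t = Real.sqrt 2 * t * (1 + t ^ 2) ^ (-q / 2 - 1 : ℝ) := by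
        simp only [hG]; field_simp
      rw [this, hphi_split t]
      exact mul_le_mul_of_nonneg_right hle (Real.rpow_nonneg (by positivity) _)
    calc ∫ t in Ioi x, phi p t ≤ ∫ t in Ioi x, Real.sqrt 2 / q * G t := by
          apply setIntegral_mono_on hint.integrableOn
            (hGint.const_mul _).integrableOn measurableSet_Ioi
          exact fun t ht => hpt t (le_trans h1x ht.le)
      _ = Real.sqrt 2 / q * F x := by rw [MeasureTheory.integral_const_mul, key x]
      _ = Real.sqrt 2 / q * phi q x := by rw [phi_eq]
      _ ≤ _ := mul_le_mul_of_nonneg_right (le_max_left _ _) (phi_nonneg q x)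
  · -- 0 ≤ x < 1
    calc ∫ t in Ioi x, phi p t ≤ ∫ t, phi p t :=
          setIntegral_le_integral hint (Eventually.of_forall (phi_nonneg p))
      _ = ((∫ t, phi p t) / phi q 1) * phi q 1 := by
          rw [div_mul_cancel₀ _ (phi_pos q 1).ne']
      _ ≤ ((∫ t, phi p t) / phi q 1) * phi q x := by
          exact mul_le_mul_of_nonneg_left (phi_anti hq.le hx h1x.le)
            (div_nonneg hI0 (phi_nonneg q 1))
      _ ≤ _ := mul_le_mul_of_nonneg_right (le_max_right _ _) (phi_nonneg q x)

lemma phi_tail_Iic {p : ℝ} (hp : 1 < p) :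
    ∃ K, 0 ≤ K ∧ ∀ x : ℝ, x ≤ 0 → ∫ t in Iic x, phi p t ≤ K * phi (p - 1) x := by
  obtain ⟨K, hK0, hK⟩ := phi_tail_Ioi hp
  refine ⟨K, hK0, fun x hx => ?_⟩
  have h1 : ∫ t in Iic x, phi p t = ∫ t in Ioi (-x), phi p t := by
    rw [← neg_neg x, ← integral_comp_neg_Ioi]
    simp [phi_even, neg_neg]
  rw [h1, ← phi_even (p - 1) x]
  exact hK (-x) (by linarith)

lemma norm_intervalIntegral_le {u : ℝ → ℂ} (hu : Integrable u) (a b : ℝ) :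
    ‖∫ t in a..b, u t‖ ≤ ∫ t, ‖u t‖ := by
  rw [intervalIntegral_eq_integral_uIoc, norm_smul]
  have h1 : ‖(if a ≤ b then (1:ℝ) else -1)‖ = 1 := by split <;> simp
  rw [h1, one_mul]
  calc ‖∫ t in Set.uIoc a b, u t‖ ≤ ∫ t in Set.uIoc a b, ‖u t‖ := norm_integral_le_integral_norm _
    _ ≤ ∫ t, ‖u t‖ :=
      setIntegral_le_integral hu.norm (Eventually.of_forall fun t => norm_nonneg _)

lemma pair_eq {w ρ : ℝ → ℂ} (hw : Integrable w)
    (heq : ∀ x, ρ x = ρ 0 + ∫ t in (0:ℝ)..x, w t) (x y : ℝ) :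
    ρ y = ρ x + ∫ t in x..y, w t := by
  rw [heq y, heq x, add_assoc,
    intervalIntegral.integral_add_adjacent_intervals hw.intervalIntegrable hw.intervalIntegrable]

lemma rep_Ioi {w ρ : ℝ → ℂ} {l : ℂ} (hw : Integrable w)
    (heq : ∀ x y : ℝ, ρ y = ρ x + ∫ t in x..y, w t)
    (hlim : Tendsto ρ atTop (𝓝 l)) (x : ℝ) : ρ x = l - ∫ t in Ioi x, w t := by
  have h1 : Tendsto (fun y => ρ x + ∫ t in x..y, w t) atTop
      (𝓝 (ρ x + ∫ t in Ioi x, w t)) :=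
    tendsto_const_nhds.add
      (intervalIntegral_tendsto_integral_Ioi x hw.integrableOn tendsto_id)
  have h2 : Tendsto (fun y => ρ x + ∫ t in x..y, w t) atTop (𝓝 l) :=
    hlim.congr (fun y => heq x y)
  have h3 := tendsto_nhds_unique h1 h2
  rw [← h3]; ring

lemma rep_Iic {w ρ : ℝ → ℂ} {l : ℂ} (hw : Integrable w)
    (heq : ∀ x y : ℝ, ρ y = ρ x + ∫ t in x..y, w t)
    (hlim : Tendsto ρ atBot (𝓝 l)) (x : ℝ) : ρ x = l + ∫ t in Iic x, w t := by
  have h1 : Tendsto (fun y => ρ x - ∫ t in y..x, w t) atBot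
      (𝓝 (ρ x - ∫ t in Iic x, w t)) :=
    tendsto_const_nhds.sub
      (intervalIntegral_tendsto_integral_Iic x hw.integrableOn tendsto_id)
  have h2 : Tendsto (fun y => ρ x - ∫ t in y..x, w t) atBot (𝓝 l) := by
    apply hlim.congr (fun y => ?_)
    rw [heq x y, intervalIntegral.integral_symm]
    ring
  have h3 := tendsto_nhds_unique h1 h2
  rw [← h3]; ring

lemma limit_zero {ψ : ℝ → ℂ} {a : ℂ} {M : ℝ} (hcont : Continuous ψ)
    (hM : ∀ x, ‖∫ t in (0:ℝ)..x, ψ t‖ ≤ M) (hlim : Tendsto ψ atTop (𝓝 a)) :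
    a = 0 := by
  by_contra ha
  have hna : 0 < ‖a‖ := norm_pos_iff.2 ha
  have hM0 : 0 ≤ M := le_trans (by simp) (hM 0)
  obtain ⟨X, hX⟩ := Metric.tendsto_atTop.mp hlim (‖a‖ / 2) (by positivity)
  set x := X + 4 * M / ‖a‖ + 1 with hxdef
  have hXx : X ≤ x := by
    have : 0 ≤ 4 * M / ‖a‖ := by positivity
    simp only [hxdef]; linarith
  have hbd2 : ‖∫ t in X..x, ψ t‖ ≤ 2 * M := by
    have hsplit : ∫ t in X..x, ψ t =
        (∫ t in (0:ℝ)..x, ψ t) - ∫ t in (0:ℝ)..X, ψ t := by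
      rw [← intervalIntegral.integral_add_adjacent_intervals
        (hcont.intervalIntegrable 0 X) (hcont.intervalIntegrable X x)]
      ring
    rw [hsplit]
    calc ‖(∫ t in (0:ℝ)..x, ψ t) - ∫ t in (0:ℝ)..X, ψ t‖
        ≤ ‖∫ t in (0:ℝ)..x, ψ t‖ + ‖∫ t in (0:ℝ)..X, ψ t‖ := norm_sub_le _ _
      _ ≤ 2 * M := by linarith [hM x, hM X]
  have hdiff : ‖∫ t in X..x, (ψ t - a)‖ ≤ ‖a‖ / 2 * |x - X| := by
    apply intervalIntegral.norm_integral_le_of_norm_le_const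
    intro t ht
    rw [Set.uIoc_of_le hXx] at ht
    have := hX t ht.1.le
    rw [dist_eq_norm] at this
    exact this.le
  have hsub : ∫ t in X..x, (ψ t - a) = (∫ t in X..x, ψ t) - (x - X) • a := by
    rw [intervalIntegral.integral_sub (hcont.intervalIntegrable X x)
      intervalIntegrable_const, intervalIntegral.integral_const]
  have hlow : (x - X) * ‖a‖ ≤ 2 * M + ‖a‖ / 2 * (x - X) := by
    have h5 : ‖(x - X) • a‖ = (x - X) * ‖a‖ := by
      rw [norm_smul, Real.norm_eq_abs, abs_of_nonneg (by linarith)]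
    calc (x - X) * ‖a‖ = ‖(x - X) • a‖ := h5.symm
      _ ≤ ‖∫ t in X..x, ψ t‖ + ‖∫ t in X..x, (ψ t - a)‖ := by
          rw [show (x - X) • a = (∫ t in X..x, ψ t) - ∫ t in X..x, (ψ t - a) by
            rw [hsub]; ring]
          exact norm_sub_le _ _
      _ ≤ 2 * M + ‖a‖ / 2 * |x - X| := add_le_add hbd2 hdiff
      _ = 2 * M + ‖a‖ / 2 * (x - X) := by rw [abs_of_nonneg (by linarith)]
  have hxX : x - X = 4 * M / ‖a‖ + 1 := by simp only [hxdef]; ring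
  rw [hxX] at hlow
  have hab : ‖a‖ ≠ 0 := by simpa using hna.ne'
  have he1 : (4 * M / ‖a‖ + 1) * ‖a‖ = 4 * M + ‖a‖ := by
    field_simp [hab]
  have he2 : ‖a‖ / 2 * (4 * M / ‖a‖ + 1) = 2 * M + ‖a‖ / 2 := by
    field_simp [hab]; ring
  rw [he1, he2] at hlow
  linarith

/-- If moreover `|V(x)| ≲ ⟨x⟩^{-3-ε}`, then `ψ₂ ∈ L¹`, the limits `l_± = lim_{±∞} ψ₁`
exist, and `ψ₁ - l₊χ_{(0,∞)} - l₋χ_{(-∞,0)}` decays like `⟨x⟩^{-ε/2}`. -/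
theorem stmt16 (m ε : ℝ) (hm : 0 < m) (hε : 0 < ε)
    (V : ℝ → (Fin 2 → ℂ) →L[ℂ] (Fin 2 → ℂ)) (CV CΨ : ℝ)
    (hVinf : ∀ x, ‖V x‖ ≤ CV)
    (hV1 : Integrable (fun x => ‖V x‖) volume)
    (hVdecay : ∃ C, ∀ x, ‖V x‖ ≤ C * Real.sqrt (1 + x ^ 2) ^ (-(3 + ε)))
    (ψ1 ψ2 : ℝ → ℂ)
    (hΨ : ∀ x, ‖(![ψ1 x, ψ2 x] : Fin 2 → ℂ)‖ ≤ CΨ)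
    (hmeas : AEStronglyMeasurable (fun t => V t ![ψ1 t, ψ2 t]) volume)
    (heq1 : ∀ x, ψ1 x = ψ1 0 +
      ∫ t in (0:ℝ)..x, (V t ![ψ1 t, ψ2 t] 1 - 2 * (m : ℂ) * ψ2 t))
    (heq2 : ∀ x, ψ2 x = ψ2 0 + ∫ t in (0:ℝ)..x, (-(V t ![ψ1 t, ψ2 t] 0))) :
    Integrable ψ2 volume ∧
      ∃ lp lm : ℂ, Tendsto ψ1 atTop (𝓝 lp) ∧ Tendsto ψ1 atBot (𝓝 lm) ∧
        ∃ C, ∀ x, ‖ψ1 x - (if 0 < x then lp else 0) - (if x < 0 then lm else 0)‖ ≤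
          C * Real.sqrt (1 + x ^ 2) ^ (-(ε / 2)) := by
  obtain ⟨C, hC⟩ := hVdecay
  have hC' : ∀ t, ‖V t‖ ≤ C * phi (3 + ε) t := hC
  have hCΨ : 0 ≤ CΨ := le_trans (norm_nonneg _) (hΨ 0)
  have hC0 : 0 ≤ C := by
    have h := hC' 0
    have h2 : phi (3 + ε) 0 = 1 := by simp [phi]
    rw [h2, mul_one] at h
    linarith [norm_nonneg (V 0)]
  set f : ℝ → (Fin 2 → ℂ) := fun t => V t ![ψ1 t, ψ2 t] with hfdef
  have hψ1b : ∀ x, ‖ψ1 x‖ ≤ CΨ := fun x =>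
    le_trans (by simpa using norm_le_pi_norm ![ψ1 x, ψ2 x] 0) (hΨ x)
  have hfb : ∀ t, ‖f t‖ ≤ C * CΨ * phi (3 + ε) t := by
    intro t
    calc ‖f t‖ ≤ ‖V t‖ * ‖![ψ1 t, ψ2 t]‖ := (V t).le_opNorm _
      _ ≤ (C * phi (3 + ε) t) * CΨ :=
          mul_le_mul (hC' t) (hΨ t) (norm_nonneg _) (mul_nonneg hC0 (phi_nonneg _ _))
      _ = C * CΨ * phi (3 + ε) t := by ring
  have hfint : Integrable f := by
    refine (hV1.const_mul CΨ).mono' hmeas (Eventually.of_forall fun t => ?_)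
    calc ‖f t‖ ≤ ‖V t‖ * ‖![ψ1 t, ψ2 t]‖ := (V t).le_opNorm _
      _ ≤ ‖V t‖ * CΨ := mul_le_mul_of_nonneg_left (hΨ t) (norm_nonneg _)
      _ = CΨ * ‖V t‖ := mul_comm _ _
  have hf0int : Integrable (fun t => f t 0) :=
    hfint.norm.mono' ((continuous_apply 0).comp_aestronglyMeasurable hmeas)
      (Eventually.of_forall fun t => norm_le_pi_norm (f t) 0)
  have hf1int : Integrable (fun t => f t 1) :=
    hfint.norm.mono' ((continuous_apply 1).comp_aestronglyMeasurable hmeas)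
      (Eventually.of_forall fun t => norm_le_pi_norm (f t) 1)
  -- continuity of ψ2
  have hψ2eq : ψ2 = fun x => ψ2 0 + ∫ t in (0:ℝ)..x, -(f t 0) := funext heq2
  have hψ2cont : Continuous ψ2 := by
    rw [hψ2eq]
    exact continuous_const.add (intervalIntegral.continuous_primitive
      (fun a b => hf0int.neg.intervalIntegrable) 0)
  -- limits of ψ2
  have hψ2top : Tendsto ψ2 atTop (𝓝 (ψ2 0 + ∫ t in Ioi 0, -(f t 0))) := by
    have h := intervalIntegral_tendsto_integral_Ioi 0
      hf0int.neg.integrableOn tendsto_id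
    exact Tendsto.congr (fun x => (heq2 x).symm) (tendsto_const_nhds.add h)
  have hψ2bot : Tendsto ψ2 atBot (𝓝 (ψ2 0 - ∫ t in Iic 0, -(f t 0))) := by
    have h := intervalIntegral_tendsto_integral_Iic 0
      hf0int.neg.integrableOn tendsto_id
    refine Tendsto.congr (fun x => ?_) (tendsto_const_nhds.sub h)
    rw [intervalIntegral.integral_symm, sub_neg_eq_add]
    exact (heq2 x).symm
  -- boundedness of the primitive of ψ2
  have hsplit : ∀ x : ℝ, ∫ t in (0:ℝ)..x, (f t 1 - 2 * (m:ℂ) * ψ2 t) =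
      (∫ t in (0:ℝ)..x, f t 1) - 2 * (m:ℂ) * ∫ t in (0:ℝ)..x, ψ2 t := by
    intro x
    rw [intervalIntegral.integral_sub hf1int.intervalIntegrable
      ((hψ2cont.intervalIntegrable 0 x).const_mul _),
      intervalIntegral.integral_const_mul]
  have hI1nn : 0 ≤ ∫ t, ‖f t 1‖ := integral_nonneg fun t => norm_nonneg _
  set M := ((∫ t, ‖f t 1‖) + 2 * CΨ) / (2 * m) with hMdef
  have hψ2prim : ∀ x, ‖∫ t in (0:ℝ)..x, ψ2 t‖ ≤ M := by
    intro x
    have h1 := heq1 x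
    rw [hsplit x] at h1
    have h2 : 2 * (m:ℂ) * ∫ t in (0:ℝ)..x, ψ2 t =
        ψ1 0 + (∫ t in (0:ℝ)..x, f t 1) - ψ1 x := by
      rw [h1]; ring
    have h3 : ‖2 * (m:ℂ) * ∫ t in (0:ℝ)..x, ψ2 t‖ =
        2 * m * ‖∫ t in (0:ℝ)..x, ψ2 t‖ := by
      rw [norm_mul, norm_mul]
      simp [Complex.norm_real, Real.norm_eq_abs, abs_of_pos hm]
    have h4 : 2 * m * ‖∫ t in (0:ℝ)..x, ψ2 t‖ ≤ (∫ t, ‖f t 1‖) + 2 * CΨ := by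
      rw [← h3, h2]
      calc ‖ψ1 0 + (∫ t in (0:ℝ)..x, f t 1) - ψ1 x‖
          ≤ ‖ψ1 0 + ∫ t in (0:ℝ)..x, f t 1‖ + ‖ψ1 x‖ := norm_sub_le _ _
        _ ≤ ‖ψ1 0‖ + ‖∫ t in (0:ℝ)..x, f t 1‖ + ‖ψ1 x‖ := by
            linarith [norm_add_le (ψ1 0) (∫ t in (0:ℝ)..x, f t 1)]
        _ ≤ (∫ t, ‖f t 1‖) + 2 * CΨ := by
            linarith [hψ1b 0, hψ1b x, norm_intervalIntegral_le hf1int 0 x]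
    rw [hMdef, le_div_iff₀ (by linarith : (0:ℝ) < 2 * m)]
    linarith
  -- the limits of ψ2 are zero
  have hatop : ψ2 0 + ∫ t in Ioi 0, -(f t 0) = 0 :=
    limit_zero hψ2cont hψ2prim hψ2top
  have habot : ψ2 0 - ∫ t in Iic 0, -(f t 0) = 0 := by
    apply limit_zero (ψ := fun t => ψ2 (-t)) (hψ2cont.comp continuous_neg)
      (M := M) (fun x => ?_) (hψ2bot.comp tendsto_neg_atTop_atBot)
    have h1 : ∫ t in (0:ℝ)..x, ψ2 (-t) = ∫ t in (-x)..(0:ℝ), ψ2 t := by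
      simpa using intervalIntegral.integral_comp_neg (a := (0:ℝ)) (b := x) (f := ψ2)
    rw [h1, intervalIntegral.integral_symm, norm_neg]
    exact hψ2prim (-x)
  have hψ2zt : Tendsto ψ2 atTop (𝓝 0) := hatop ▸ hψ2top
  have hψ2zb : Tendsto ψ2 atBot (𝓝 0) := habot ▸ hψ2bot
  -- representation of ψ2 and its decay
  have hgint : Integrable (fun t => -(f t 0)) := hf0int.neg
  have hpair2 : ∀ x y : ℝ, ψ2 y = ψ2 x + ∫ t in x..y, -(f t 0) :=
    pair_eq hgint heq2
  have hrep2t : ∀ x, ψ2 x = - ∫ t in Ioi x, -(f t 0) := by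
    intro x
    have := rep_Ioi hgint hpair2 hψ2zt x
    rw [this]; ring
  have hrep2b : ∀ x, ψ2 x = ∫ t in Iic x, -(f t 0) := by
    intro x
    have := rep_Iic hgint hpair2 hψ2zb x
    rw [this]; ring
  obtain ⟨K3, hK30, hK3⟩ := phi_tail_Ioi (p := 3 + ε) (by linarith)
  obtain ⟨K3', hK30', hK3'⟩ := phi_tail_Iic (p := 3 + ε) (by linarith)
  rw [show (3 + ε) - 1 = 2 + ε by ring] at hK3 hK3'
  have hphi3int : Integrable (phi (3 + ε)) := phi_integrable (by linarith)
  have hf0norm_le : ∀ t, ‖f t 0‖ ≤ C * CΨ * phi (3 + ε) t := fun t =>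
    le_trans (norm_le_pi_norm (f t) 0) (hfb t)
  set D := C * CΨ * (K3 + K3') with hDdef
  have hD0 : 0 ≤ D := by positivity
  have hψ2dec : ∀ x, ‖ψ2 x‖ ≤ D * phi (2 + ε) x := by
    intro x
    rcases le_or_gt 0 x with hx | hx
    · rw [hrep2t x, norm_neg]
      calc ‖∫ t in Ioi x, -(f t 0)‖ ≤ ∫ t in Ioi x, ‖-(f t 0)‖ :=
            norm_integral_le_integral_norm _
        _ = ∫ t in Ioi x, ‖f t 0‖ := by simp
        _ ≤ ∫ t in Ioi x, C * CΨ * phi (3 + ε) t := by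
            apply setIntegral_mono_on hf0int.norm.integrableOn
              ((hphi3int.const_mul _).integrableOn) measurableSet_Ioi
            exact fun t _ => hf0norm_le t
        _ = C * CΨ * ∫ t in Ioi x, phi (3 + ε) t := integral_const_mul _ _
        _ ≤ C * CΨ * (K3 * phi (2 + ε) x) :=
            mul_le_mul_of_nonneg_left (hK3 x hx) (by positivity)
        _ ≤ D * phi (2 + ε) x := by
            rw [hDdef]
            nlinarith [phi_nonneg (2 + ε) x, phi_nonneg (2 + ε) x,
              mul_nonneg (mul_nonneg hC0 hCΨ) (mul_nonneg hK30' (phi_nonneg (2 + ε) x))]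
    · rw [hrep2b x]
      calc ‖∫ t in Iic x, -(f t 0)‖ ≤ ∫ t in Iic x, ‖-(f t 0)‖ :=
            norm_integral_le_integral_norm _
        _ = ∫ t in Iic x, ‖f t 0‖ := by simp
        _ ≤ ∫ t in Iic x, C * CΨ * phi (3 + ε) t := by
            apply setIntegral_mono_on hf0int.norm.integrableOn
              ((hphi3int.const_mul _).integrableOn) measurableSet_Iic
            exact fun t _ => hf0norm_le t
        _ = C * CΨ * ∫ t in Iic x, phi (3 + ε) t := integral_const_mul _ _
        _ ≤ C * CΨ * (K3' * phi (2 + ε) x) :=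
            mul_le_mul_of_nonneg_left (hK3' x hx.le) (by positivity)
        _ ≤ D * phi (2 + ε) x := by
            rw [hDdef]
            nlinarith [phi_nonneg (2 + ε) x,
              mul_nonneg (mul_nonneg hC0 hCΨ) (mul_nonneg hK30 (phi_nonneg (2 + ε) x))]
  have hphi2int : Integrable (phi (2 + ε)) := phi_integrable (by linarith)
  have hψ2int : Integrable ψ2 :=
    (hphi2int.const_mul D).mono' hψ2cont.aestronglyMeasurable
      (Eventually.of_forall hψ2dec)
  refine ⟨hψ2int, ?_⟩
  -- the function u and limits of ψ1
  set u : ℝ → ℂ := fun t => f t 1 - 2 * (m:ℂ) * ψ2 t with hudef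
  have huint : Integrable u := hf1int.sub (hψ2int.const_mul _)
  have hub : ∀ t, ‖u t‖ ≤ (C * CΨ + 2 * m * D) * phi (2 + ε) t := by
    intro t
    have h1 : ‖u t‖ ≤ ‖f t 1‖ + ‖2 * (m:ℂ) * ψ2 t‖ := norm_sub_le _ _
    have h2 : ‖2 * (m:ℂ) * ψ2 t‖ = 2 * m * ‖ψ2 t‖ := by
      rw [norm_mul, norm_mul]
      simp [Complex.norm_real, Real.norm_eq_abs, abs_of_pos hm]
    have h3 : ‖f t 1‖ ≤ C * CΨ * phi (2 + ε) t :=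
      le_trans (le_trans (norm_le_pi_norm (f t) 1) (hfb t))
        (mul_le_mul_of_nonneg_left (phi_mono_exp (by linarith) t) (by positivity))
    have h4 : 2 * m * ‖ψ2 t‖ ≤ 2 * m * (D * phi (2 + ε) t) :=
      mul_le_mul_of_nonneg_left (hψ2dec t) (by positivity)
    rw [h2] at h1
    calc ‖u t‖ ≤ C * CΨ * phi (2 + ε) t + 2 * m * (D * phi (2 + ε) t) := by linarith
      _ = (C * CΨ + 2 * m * D) * phi (2 + ε) t := by ring
  have hpair1 : ∀ x y : ℝ, ψ1 y = ψ1 x + ∫ t in x..y, u t := pair_eq huint heq1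
  have hψ1top : Tendsto ψ1 atTop (𝓝 (ψ1 0 + ∫ t in Ioi 0, u t)) := by
    have h := intervalIntegral_tendsto_integral_Ioi 0 huint.integrableOn tendsto_id
    exact Tendsto.congr (fun x => (heq1 x).symm) (tendsto_const_nhds.add h)
  have hψ1bot : Tendsto ψ1 atBot (𝓝 (ψ1 0 - ∫ t in Iic 0, u t)) := by
    have h := intervalIntegral_tendsto_integral_Iic 0 huint.integrableOn tendsto_id
    refine Tendsto.congr (fun x => ?_) (tendsto_const_nhds.sub h)
    rw [intervalIntegral.integral_symm, sub_neg_eq_add]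
    exact (heq1 x).symm
  set lp := ψ1 0 + ∫ t in Ioi 0, u t with hlp
  set lm := ψ1 0 - ∫ t in Iic 0, u t with hlm
  refine ⟨lp, lm, hψ1top, hψ1bot, ?_⟩
  have hrep1t : ∀ x, ψ1 x = lp - ∫ t in Ioi x, u t := rep_Ioi huint hpair1 hψ1top
  have hrep1b : ∀ x, ψ1 x = lm + ∫ t in Iic x, u t := rep_Iic huint hpair1 hψ1bot
  obtain ⟨K2, hK20, hK2⟩ := phi_tail_Ioi (p := 2 + ε) (by linarith)
  obtain ⟨K2', hK20', hK2'⟩ := phi_tail_Iic (p := 2 + ε) (by linarith)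
  rw [show (2 + ε) - 1 = 1 + ε by ring] at hK2 hK2'
  set E := C * CΨ + 2 * m * D with hEdef
  have hE0 : 0 ≤ E := by positivity
  have htail : ∀ x : ℝ, 0 ≤ x → ‖∫ t in Ioi x, u t‖ ≤ E * K2 * phi (ε / 2) x := by
    intro x hx
    calc ‖∫ t in Ioi x, u t‖ ≤ ∫ t in Ioi x, ‖u t‖ := norm_integral_le_integral_norm _
      _ ≤ ∫ t in Ioi x, E * phi (2 + ε) t := by
          apply setIntegral_mono_on huint.norm.integrableOn
            ((hphi2int.const_mul _).integrableOn) measurableSet_Ioi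
          exact fun t _ => hub t
      _ = E * ∫ t in Ioi x, phi (2 + ε) t := integral_const_mul _ _
      _ ≤ E * (K2 * phi (1 + ε) x) := mul_le_mul_of_nonneg_left (hK2 x hx) hE0
      _ ≤ E * K2 * phi (ε / 2) x := by
          rw [mul_assoc]
          exact mul_le_mul_of_nonneg_left
            (mul_le_mul_of_nonneg_left (phi_mono_exp (by linarith) x) hK20) hE0
  have htail' : ∀ x : ℝ, x ≤ 0 → ‖∫ t in Iic x, u t‖ ≤ E * K2' * phi (ε / 2) x := by
    intro x hx
    calc ‖∫ t in Iic x, u t‖ ≤ ∫ t in Iic x, ‖u t‖ := norm_integral_le_integral_norm _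
      _ ≤ ∫ t in Iic x, E * phi (2 + ε) t := by
          apply setIntegral_mono_on huint.norm.integrableOn
            ((hphi2int.const_mul _).integrableOn) measurableSet_Iic
          exact fun t _ => hub t
      _ = E * ∫ t in Iic x, phi (2 + ε) t := integral_const_mul _ _
      _ ≤ E * (K2' * phi (1 + ε) x) := mul_le_mul_of_nonneg_left (hK2' x hx) hE0
      _ ≤ E * K2' * phi (ε / 2) x := by
          rw [mul_assoc]
          exact mul_le_mul_of_nonneg_left
            (mul_le_mul_of_nonneg_left (phi_mono_exp (by linarith) x) hK20') hE0
  refine ⟨E * (K2 + K2') + CΨ, fun x => ?_⟩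
  have hgoal : ∀ y : ℝ, Real.sqrt (1 + y ^ 2) ^ (-(ε / 2)) = phi (ε / 2) y :=
    fun y => rfl
  rw [hgoal x]
  have hEK : E * K2 ≤ E * (K2 + K2') + CΨ := by nlinarith
  have hEK' : E * K2' ≤ E * (K2 + K2') + CΨ := by nlinarith
  rcases lt_trichotomy x 0 with hx | hx | hx
  · rw [if_neg (by linarith), if_pos hx, sub_zero]
    have h1 : ψ1 x - lm = ∫ t in Iic x, u t := by rw [hrep1b x]; ring
    rw [h1]
    exact le_trans (htail' x hx.le)
      (mul_le_mul_of_nonneg_right hEK' (phi_nonneg _ _))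
  · subst hx
    rw [if_neg (lt_irrefl 0), if_neg (lt_irrefl 0), sub_zero, sub_zero]
    have h2 : phi (ε / 2) 0 = 1 := by simp [phi]
    rw [h2, mul_one]
    have : 0 ≤ E * (K2 + K2') := by positivity
    linarith [hψ1b 0]
  · rw [if_pos hx, if_neg (by linarith), sub_zero]
    have h1 : ψ1 x - lp = -∫ t in Ioi x, u t := by rw [hrep1t x]; ring
    rw [h1, norm_neg]
    exact le_trans (htail x hx.le)
      (mul_le_mul_of_nonneg_right hEK (phi_nonneg _ _))
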